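/- arXiv:1207.5967 — 3 statements merged into one kernel-verified Lean document; each statement's English description precedes it below -/
import Mathlib

section
/- Let Z be a random vector in ℝ^k with E‖Z‖² < ∞ whose characteristic function φ(t) = E[exp(i t · Z)] is integrable with respect to Lebesgue measure on ℝ^k. Then the covariance matrix of Z is positive definite; that is, for every nonzero a ∈ ℝ^k, Var(a · Z) > 0. -/
open MeasureTheory ProbabilityTheory
open scoped RealInnerProductSpace ENNReal

noncomputable section

lemma norm_exp_I_mul_sub_one_le (x : ℝ) : ‖Complex.exp (Complex.I * x) - 1‖ ≤ |x| := by
  have h1 : Complex.exp (Complex.I * x) = (Real.cos x : ℂ) + (Real.sin x : ℂ) * Complex.I := by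
    rw [mul_comm, Complex.exp_mul_I, ← Complex.ofReal_cos, ← Complex.ofReal_sin]
  have h2 : Complex.exp (Complex.I * x) - 1 = ((Real.cos x - 1 : ℝ) : ℂ) + ((Real.sin x : ℝ) : ℂ) * Complex.I := by
    rw [h1]; push_cast; ring
  have h3 : ‖Complex.exp (Complex.I * x) - 1‖ ^ 2 = (Real.cos x - 1) ^ 2 + Real.sin x ^ 2 := by
    rw [h2, Complex.sq_norm, Complex.normSq_add_mul_I]
  have h4 := Real.one_sub_sq_div_two_le_cos (x := x)
  have h5 := Real.sin_sq_add_cos_sq x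
  nlinarith [norm_nonneg (Complex.exp (Complex.I * x) - 1), abs_nonneg x, sq_abs x]

/-- if `Z` is a random vector in `ℝ^k` with `E‖Z‖² < ∞` whose characteristic
function `t ↦ E[exp(i t · Z)]` is Lebesgue-integrable on `ℝ^k`, then the covariance matrix of
`Z` is positive definite: for every nonzero `a ∈ ℝ^k`, `Var(a · Z) > 0`. -/
theorem stmt6 {k : ℕ} {Ω : Type*} [MeasurableSpace Ω] (P : Measure Ω) [IsProbabilityMeasure P]
    (Z : Ω → EuclideanSpace ℝ (Fin k)) (hZmeas : Measurable Z) (hZ2 : MemLp Z 2 P)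
    (hcf : Integrable
      (fun t : EuclideanSpace ℝ (Fin k) =>
        ∫ ω, Complex.exp (Complex.I * ((⟪t, Z ω⟫ : ℝ) : ℂ)) ∂P)
      (volume : Measure (EuclideanSpace ℝ (Fin k)))) :
    ∀ a : EuclideanSpace ℝ (Fin k), a ≠ 0 → 0 < variance (fun ω => ⟪a, Z ω⟫) P := by
  intro a ha
  by_contra hvar
  push_neg at hvar
  set φ : EuclideanSpace ℝ (Fin k) → ℂ :=
    fun t => ∫ ω, Complex.exp (Complex.I * ((⟪t, Z ω⟫ : ℝ) : ℂ)) ∂P with hφ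
  set f : Ω → ℝ := fun ω => ⟪a, Z ω⟫ with hfdef
  have hfmem : MemLp f 2 P := hZ2.const_inner a
  have hvar0 : variance f P = 0 := le_antisymm hvar (variance_nonneg f P)
  have hev : evariance f P = 0 := by
    rw [← hfmem.ofReal_variance_eq, hvar0, ENNReal.ofReal_zero]
  set c : ℝ := ∫ ω, f ω ∂P with hc
  have hconst : ∀ᵐ ω ∂P, f ω = c :=
    (evariance_eq_zero_iff hfmem.1.aemeasurable).mp hev
  -- integrability of the integrand
  have hIntd : ∀ t : EuclideanSpace ℝ (Fin k),
      Integrable (fun ω => Complex.exp (Complex.I * ((⟪t, Z ω⟫ : ℝ) : ℂ))) P := by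
    intro t
    have hm : Measurable (fun ω => Complex.exp (Complex.I * ((⟪t, Z ω⟫ : ℝ) : ℂ))) :=
      Complex.measurable_exp.comp
        (measurable_const.mul (Complex.measurable_ofReal.comp (measurable_const.inner hZmeas)))
    refine (integrable_const (1 : ℝ)).mono' hm.aestronglyMeasurable ?_
    filter_upwards with ω
    simp [Complex.norm_exp]
  -- translation identity
  have hkey : ∀ (t : EuclideanSpace ℝ (Fin k)) (s : ℝ),
      φ (t + s • a) = Complex.exp (Complex.I * ((s * c : ℝ) : ℂ)) * φ t := by
    intro t s
    rw [hφ, ← integral_const_mul]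
    refine integral_congr_ae ?_
    filter_upwards [hconst] with ω hω
    have h1 : ⟪t + s • a, Z ω⟫ = ⟪t, Z ω⟫ + s * c := by
      rw [inner_add_left, real_inner_smul_left,
        show (inner ℝ a (Z ω) : ℝ) = c from hω]
    rw [h1, ← Complex.exp_add]
    push_cast
    ring_nf
  have hnorm : ∀ (t : EuclideanSpace ℝ (Fin k)) (s : ℝ), ‖φ (t + s • a)‖ = ‖φ t‖ := by
    intro t s
    rw [hkey t s, norm_mul]
    simp [Complex.norm_exp]
  -- bound near zero
  obtain ⟨ε, hε, hlow⟩ : ∃ ε : ℝ, 0 < ε ∧ ∀ t : EuclideanSpace ℝ (Fin k), ‖t‖ ≤ ε → (1:ℝ)/2 ≤ ‖φ t‖ := by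
    have hZ1 : Integrable Z P := hZ2.integrable one_le_two
    set M : ℝ := ∫ ω, ‖Z ω‖ ∂P with hM
    have hM0 : 0 ≤ M := integral_nonneg fun ω => norm_nonneg _
    refine ⟨1 / (2 * (M + 1)), by positivity, ?_⟩
    intro t ht
    have hsub : φ t - 1 = ∫ ω, (Complex.exp (Complex.I * ((⟪t, Z ω⟫ : ℝ) : ℂ)) - 1) ∂P := by
      rw [integral_sub (hIntd t) (integrable_const 1), integral_const, probReal_univ]
      simp [hφ]
    have hb : ‖φ t - 1‖ ≤ ‖t‖ * M := by
      rw [hsub]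
      calc ‖∫ ω, (Complex.exp (Complex.I * ((⟪t, Z ω⟫ : ℝ) : ℂ)) - 1) ∂P‖
          ≤ ∫ ω, ‖Complex.exp (Complex.I * ((⟪t, Z ω⟫ : ℝ) : ℂ)) - 1‖ ∂P :=
            norm_integral_le_integral_norm _
        _ ≤ ∫ ω, ‖t‖ * ‖Z ω‖ ∂P := by
            refine integral_mono ((hIntd t).sub (integrable_const 1)).norm
              (hZ1.norm.const_mul ‖t‖) fun ω => ?_
            calc ‖Complex.exp (Complex.I * ((⟪t, Z ω⟫ : ℝ) : ℂ)) - 1‖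
                ≤ |(⟪t, Z ω⟫ : ℝ)| := norm_exp_I_mul_sub_one_le _
              _ ≤ ‖t‖ * ‖Z ω‖ := abs_real_inner_le_norm _ _
        _ = ‖t‖ * M := by rw [hM, integral_const_mul]
    have h1 : ‖(1:ℂ)‖ - ‖φ t‖ ≤ ‖φ t - 1‖ := by
      rw [norm_sub_rev]; exact norm_sub_norm_le _ _
    have h2 : ‖(1:ℂ)‖ = 1 := by norm_num
    have h3 : ‖t‖ * M ≤ 1/2 := by
      have hM1 : 0 < M + 1 := by linarith
      have := mul_le_mul_of_nonneg_right ht hM0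
      calc ‖t‖ * M ≤ 1 / (2 * (M + 1)) * M := this
        _ ≤ 1/2 := by rw [div_mul_eq_mul_div, div_le_div_iff₀ (by positivity) (by norm_num)]; nlinarith
    linarith
  -- disjoint balls and contradiction
  classical
  set L : ℝ := 2 * ε + 1 with hL
  have hLpos : 0 < L := by positivity
  have hane : (0:ℝ) < ‖a‖ := norm_pos_iff.mpr ha
  set ctr : ℕ → EuclideanSpace ℝ (Fin k) := fun n => ((n : ℝ) * L / ‖a‖) • a with hctr
  set B : ℕ → Set (EuclideanSpace ℝ (Fin k)) := fun n => Metric.closedBall (ctr n) ε with hB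
  have hdist : ∀ m n : ℕ, dist (ctr m) (ctr n) = |(m:ℝ) - n| * L := by
    intro m n
    rw [dist_eq_norm]
    have he : ctr m - ctr n = (((m:ℝ) - n) * L / ‖a‖) • a := by
      rw [hctr, ← sub_smul]; congr 1; field_simp
    rw [he, norm_smul, Real.norm_eq_abs, abs_div, abs_mul, abs_of_pos hLpos,
      abs_of_pos hane, div_mul_cancel₀]
    exact hane.ne'
  have hdisj : Pairwise (Function.onFun Disjoint B) := by
    intro m n hmn
    rw [Function.onFun, Set.disjoint_left]
    intro x hxm hxn
    have h1 : dist x (ctr m) ≤ ε := Metric.mem_closedBall.mp hxm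
    have h2 : dist x (ctr n) ≤ ε := Metric.mem_closedBall.mp hxn
    have h3 : dist (ctr m) (ctr n) ≤ 2 * ε := by
      calc dist (ctr m) (ctr n) ≤ dist (ctr m) x + dist x (ctr n) := dist_triangle _ _ _
        _ ≤ 2 * ε := by rw [dist_comm (ctr m) x]; linarith
    have h4 : (1:ℝ) ≤ |(m:ℝ) - n| := by
      have : ((m:ℤ) - n) ≠ 0 := sub_ne_zero_of_ne (by exact_mod_cast hmn)
      have := Int.one_le_abs this
      push_cast at this ⊢
      exact_mod_cast this
    rw [hdist m n] at h3
    nlinarith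
  have hφlow : ∀ n : ℕ, ∀ x ∈ B n, (1:ℝ)/2 ≤ ‖φ x‖ := by
    intro n x hx
    have he : x = (x - ctr n) + ((n:ℝ) * L / ‖a‖) • a := by rw [hctr]; abel
    rw [he, hnorm]
    refine hlow _ ?_
    have := Metric.mem_closedBall.mp hx
    rwa [dist_eq_norm] at this
  have hUnion : volume (⋃ n, B n) = ⊤ := by
    rw [measure_iUnion hdisj fun n => Metric.isClosed_closedBall.measurableSet]
    have hv : ∀ n : ℕ, volume (B n) = volume (Metric.closedBall (0 : EuclideanSpace ℝ (Fin k)) ε) :=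
      fun n => Measure.addHaar_closedBall_center _ _ _
    rw [tsum_congr hv]
    exact ENNReal.tsum_const_eq_top_of_ne_zero (Metric.measure_closedBall_pos volume 0 hε).ne'
  have hlint : ∫⁻ t, ‖φ t‖₊ ∂(volume : Measure (EuclideanSpace ℝ (Fin k))) = ⊤ := by
    refine top_unique ?_
    have hUm : MeasurableSet (⋃ n, B n) :=
      MeasurableSet.iUnion fun n => Metric.isClosed_closedBall.measurableSet
    calc (⊤ : ℝ≥0∞) = ENNReal.ofReal (1/2) * volume (⋃ n, B n) := by
          rw [hUnion, ENNReal.mul_top (by norm_num)]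
      _ = ∫⁻ t, (⋃ n, B n).indicator (fun _ => ENNReal.ofReal (1/2)) t
            ∂(volume : Measure (EuclideanSpace ℝ (Fin k))) := by
          exact (lintegral_indicator_const hUm _).symm
      _ ≤ ∫⁻ t, ‖φ t‖₊ ∂(volume : Measure (EuclideanSpace ℝ (Fin k))) := by
          refine lintegral_mono fun t => ?_
          by_cases h : t ∈ ⋃ n, B n
          · rw [Set.indicator_of_mem h]
            obtain ⟨n, hn⟩ := Set.mem_iUnion.mp h
            have := hφlow n t hn
            rw [← enorm_eq_nnnorm, ← ofReal_norm]
            exact ENNReal.ofReal_le_ofReal this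
          · rw [Set.indicator_of_notMem h]; exact zero_le'
  have hfin : (∫⁻ t, ‖φ t‖₊ ∂(volume : Measure (EuclideanSpace ℝ (Fin k)))) < ⊤ :=
    hcf.hasFiniteIntegral
  rw [hlint] at hfin
  exact lt_irrefl _ hfin

end
end

section
/- Let (X, Y) be a pair of random vectors with X taking values in ℝⁿ and Y in ℝ^m, with joint characteristic function ψ(u, v) = E[exp(i(u · X + v · Y))]. Suppose ψ is real-valued and nonnegative everywhere, and Y has a Lebesgue density bounded by M. Then for every u ∈ ℝⁿ, ∫_{ℝ^m} ψ(u, v) dv ≤ M(2π)^m. -/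
open MeasureTheory
open scoped RealInnerProductSpace NNReal ENNReal

set_option maxHeartbeats 1000000

noncomputable section

/-- let `(X, Y)` be a pair of random vectors in `ℝⁿ × ℝ^m` with joint
characteristic function `ψ(u,v) = E[exp(i(u·X + v·Y))]`. If `ψ` is real-valued and
nonnegative everywhere and `Y` has a Lebesgue density bounded by `M`, then for every `u`,
`∫_{ℝ^m} ψ(u,v) dv ≤ M (2π)^m`. -/
theorem stmt8 {n m : ℕ} {Ω : Type*} [MeasurableSpace Ω] (P : Measure Ω)
    [IsProbabilityMeasure P]
    (X : Ω → EuclideanSpace ℝ (Fin n)) (Y : Ω → EuclideanSpace ℝ (Fin m))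
    (hX : Measurable X) (hY : Measurable Y)
    (f : EuclideanSpace ℝ (Fin m) → ℝ) (hf : Measurable f) (M : ℝ)
    (hfM : ∀ᵐ y ∂(volume : Measure (EuclideanSpace ℝ (Fin m))), f y ≤ M)
    (hdens : Measure.map Y P
      = (volume : Measure (EuclideanSpace ℝ (Fin m))).withDensity
          fun y => ENNReal.ofReal (f y))
    (ψ : EuclideanSpace ℝ (Fin n) → EuclideanSpace ℝ (Fin m) → ℂ)
    (hψ : ψ = fun u v => ∫ ω, Complex.exp (Complex.I * ((⟪u, X ω⟫ + ⟪v, Y ω⟫ : ℝ) : ℂ)) ∂P)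
    (hreal : ∀ u v, (ψ u v).im = 0) (hnonneg : ∀ u v, 0 ≤ (ψ u v).re) :
    ∀ u : EuclideanSpace ℝ (Fin n),
      ∫⁻ v, ENNReal.ofReal ((ψ u v).re) ∂(volume : Measure (EuclideanSpace ℝ (Fin m)))
        ≤ ENNReal.ofReal (M * (2 * Real.pi) ^ m) := by
  intro u
  have hM0 : 0 ≤ M := by
    by_contra h
    push_neg at h
    have h1 : (Measure.map Y P) Set.univ = 1 := by
      rw [Measure.map_apply hY MeasurableSet.univ]
      simp
    rw [hdens, withDensity_apply _ MeasurableSet.univ, Measure.restrict_univ] at h1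
    have h2 : ∀ᵐ y ∂(volume : Measure (EuclideanSpace ℝ (Fin m))),
        ENNReal.ofReal (f y) = 0 := by
      filter_upwards [hfM] with y hy
      exact ENNReal.ofReal_eq_zero.2 (hy.trans h.le)
    rw [lintegral_congr_ae h2, lintegral_zero] at h1
    exact zero_ne_one h1
  -- measurability of the integrand as a function of the pair (v, ω)
  have hpm : Measurable (fun p : EuclideanSpace ℝ (Fin m) × Ω =>
      Complex.exp (Complex.I * ((⟪u, X p.2⟫ + ⟪p.1, Y p.2⟫ : ℝ) : ℂ))) := by
    exact Complex.measurable_exp.comp (measurable_const.mul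
      (Complex.measurable_ofReal.comp
        ((measurable_const.inner (hX.comp measurable_snd)).add
          (measurable_fst.inner (hY.comp measurable_snd)))))
  have hψsm : StronglyMeasurable (fun v => ψ u v) := by
    rw [hψ]
    exact hpm.stronglyMeasurable.integral_prod_right'
  have hnorm1 : ∀ (ω : Ω) (v : EuclideanSpace ℝ (Fin m)),
      ‖Complex.exp (Complex.I * ((⟪u, X ω⟫ + ⟪v, Y ω⟫ : ℝ) : ℂ))‖ = 1 := by
    intro ω v
    rw [Complex.norm_exp]
    simp
  have hψ1 : ∀ v, ‖ψ u v‖ ≤ 1 := by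
    intro v
    rw [hψ]
    refine (norm_integral_le_integral_norm _).trans ?_
    simp only [hnorm1]
    simp
  -- the key estimate for a fixed Gaussian damping parameter ε > 0
  have key : ∀ ε : ℝ, 0 < ε →
      (∫⁻ v, ENNReal.ofReal ((ψ u v).re * Real.exp (-ε * ‖v‖ ^ 2))
          ∂(volume : Measure (EuclideanSpace ℝ (Fin m))))
        ≤ ENNReal.ofReal (M * (2 * Real.pi) ^ m) := by
    intro ε hε
    have hπε : (0:ℝ) < Real.pi / ε := div_pos Real.pi_pos hε
    -- Gaussian integrability (real)
    have hGint : ∀ b : ℝ, 0 < b →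
        Integrable (fun v : EuclideanSpace ℝ (Fin m) => Real.exp (-b * ‖v‖ ^ 2)) := by
      intro b hb
      have h1 := (GaussianFourier.integrable_cexp_neg_mul_sq_norm_add
        (V := EuclideanSpace ℝ (Fin m)) (b := (b : ℂ)) (by simpa using hb) 0
        (0 : EuclideanSpace ℝ (Fin m))).norm
      refine h1.congr (Filter.Eventually.of_forall fun v => ?_)
      simp only [zero_mul, add_zero, Complex.norm_exp]
      congr 1
      rw [show -(b:ℂ) * (‖v‖:ℂ) ^ 2 = ((-b * ‖v‖ ^ 2 : ℝ) : ℂ) by push_cast; ring,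
        Complex.ofReal_re]
    have hgi := hGint ε hε
    have hcont : Continuous (fun v : EuclideanSpace ℝ (Fin m) =>
        ((Real.exp (-ε * ‖v‖ ^ 2) : ℝ) : ℂ)) := by fun_prop
    have hInt1 : Integrable (fun v : EuclideanSpace ℝ (Fin m) =>
        ψ u v * ((Real.exp (-ε * ‖v‖ ^ 2) : ℝ) : ℂ)) := by
      refine Integrable.mono' hgi
        ((hψsm.mul hcont.stronglyMeasurable).aestronglyMeasurable)
        (Filter.Eventually.of_forall fun v => ?_)
      rw [norm_mul]
      have h2 : ‖((Real.exp (-ε * ‖v‖ ^ 2) : ℝ) : ℂ)‖ = Real.exp (-ε * ‖v‖ ^ 2) := by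
        rw [Complex.norm_real, Real.norm_eq_abs, abs_of_pos (Real.exp_pos _)]
      rw [h2]
      nlinarith [Real.exp_pos (-ε * ‖v‖ ^ 2), norm_nonneg (ψ u v), hψ1 v]
    -- Fubini
    have hωmeas : ∀ v : EuclideanSpace ℝ (Fin m), Measurable (fun ω : Ω =>
        Complex.exp (Complex.I * ((⟪u, X ω⟫ + ⟪v, Y ω⟫ : ℝ) : ℂ))) := fun v =>
      Complex.measurable_exp.comp (measurable_const.mul
        (Complex.measurable_ofReal.comp
          ((measurable_const.inner hX).add (measurable_const.inner hY))))
    have hFint : Integrable (Function.uncurry fun (v : EuclideanSpace ℝ (Fin m)) (ω : Ω) =>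
        Complex.exp (Complex.I * ((⟪u, X ω⟫ + ⟪v, Y ω⟫ : ℝ) : ℂ))
          * ((Real.exp (-ε * ‖v‖ ^ 2) : ℝ) : ℂ))
        ((volume : Measure (EuclideanSpace ℝ (Fin m))).prod P) := by
      have hFsm : AEStronglyMeasurable (Function.uncurry fun (v : EuclideanSpace ℝ (Fin m)) (ω : Ω) =>
          Complex.exp (Complex.I * ((⟪u, X ω⟫ + ⟪v, Y ω⟫ : ℝ) : ℂ))
            * ((Real.exp (-ε * ‖v‖ ^ 2) : ℝ) : ℂ))
          ((volume : Measure (EuclideanSpace ℝ (Fin m))).prod P) :=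
        ((hpm.mul (Complex.measurable_ofReal.comp
          ((by fun_prop : Measurable fun v : EuclideanSpace ℝ (Fin m) =>
            Real.exp (-ε * ‖v‖ ^ 2)).comp measurable_fst))).stronglyMeasurable).aestronglyMeasurable
      rw [integrable_prod_iff hFsm]
      simp only [Function.uncurry_apply_pair]
      constructor
      · refine Filter.Eventually.of_forall fun v => ?_
        refine Integrable.mono' (integrable_const (Real.exp (-ε * ‖v‖ ^ 2)))
          (((hωmeas v).mul_const _).stronglyMeasurable.aestronglyMeasurable)
          (Filter.Eventually.of_forall fun ω => ?_)
        rw [norm_mul, hnorm1, one_mul, Complex.norm_real, Real.norm_eq_abs,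
          abs_of_pos (Real.exp_pos _)]
      · refine hgi.congr (Filter.Eventually.of_forall fun v => ?_)
        have : ∀ ω : Ω, ‖Complex.exp (Complex.I * ((⟪u, X ω⟫ + ⟪v, Y ω⟫ : ℝ) : ℂ))
            * ((Real.exp (-ε * ‖v‖ ^ 2) : ℝ) : ℂ)‖ = Real.exp (-ε * ‖v‖ ^ 2) := by
          intro ω
          rw [norm_mul, hnorm1, one_mul, Complex.norm_real, Real.norm_eq_abs,
            abs_of_pos (Real.exp_pos _)]
        simp only [Function.uncurry, this]
        simp
    have hswap : (∫ v : EuclideanSpace ℝ (Fin m), ψ u v * ((Real.exp (-ε * ‖v‖ ^ 2) : ℝ) : ℂ))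
        = ∫ ω, (∫ v : EuclideanSpace ℝ (Fin m),
            Complex.exp (Complex.I * ((⟪u, X ω⟫ + ⟪v, Y ω⟫ : ℝ) : ℂ))
              * ((Real.exp (-ε * ‖v‖ ^ 2) : ℝ) : ℂ)) ∂P := by
      have e1 : ∀ v : EuclideanSpace ℝ (Fin m), ψ u v * ((Real.exp (-ε * ‖v‖ ^ 2) : ℝ) : ℂ)
          = ∫ ω, Complex.exp (Complex.I * ((⟪u, X ω⟫ + ⟪v, Y ω⟫ : ℝ) : ℂ))
              * ((Real.exp (-ε * ‖v‖ ^ 2) : ℝ) : ℂ) ∂P := by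
        intro v
        rw [hψ]
        exact (integral_mul_const _ _).symm
      simp_rw [e1]
      exact integral_integral_swap hFint
    -- the inner Gaussian integral
    have hGauss : ∀ ω : Ω, (∫ v : EuclideanSpace ℝ (Fin m),
        Complex.exp (Complex.I * ((⟪u, X ω⟫ + ⟪v, Y ω⟫ : ℝ) : ℂ))
          * ((Real.exp (-ε * ‖v‖ ^ 2) : ℝ) : ℂ))
        = Complex.exp (Complex.I * ((⟪u, X ω⟫ : ℝ) : ℂ))
          * ((((Real.pi / ε : ℝ)) : ℂ) ^ ((m : ℂ) / 2)
            * Complex.exp (((-(1 / (4 * ε)) * ‖Y ω‖ ^ 2 : ℝ) : ℂ))) := by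
      intro ω
      have e2 : ∀ v : EuclideanSpace ℝ (Fin m),
          Complex.exp (Complex.I * ((⟪u, X ω⟫ + ⟪v, Y ω⟫ : ℝ) : ℂ))
            * ((Real.exp (-ε * ‖v‖ ^ 2) : ℝ) : ℂ)
          = Complex.exp (Complex.I * ((⟪u, X ω⟫ : ℝ) : ℂ))
            * Complex.exp (-(ε:ℂ) * (‖v‖:ℂ) ^ 2 + Complex.I * ((⟪Y ω, v⟫ : ℝ) : ℂ)) := by
        intro v
        rw [Complex.ofReal_exp, ← Complex.exp_add, ← Complex.exp_add]
        congr 1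
        rw [real_inner_comm (Y ω) v]
        push_cast
        ring
      simp_rw [e2]
      rw [integral_const_mul]
      congr 1
      rw [GaussianFourier.integral_cexp_neg_mul_sq_norm_add
        (V := EuclideanSpace ℝ (Fin m)) (by simpa using hε) Complex.I (Y ω)]
      rw [finrank_euclideanSpace_fin]
      congr 1
      · push_cast
        ring_nf
      · rw [Complex.I_sq]
        congr 1
        push_cast
        field_simp
    -- bound the probability-side integral via the density
    have hb4 : (0:ℝ) < 1 / (4 * ε) := by positivity
    have hYcont : Continuous (fun y : EuclideanSpace ℝ (Fin m) =>
        Real.exp (-(1 / (4 * ε)) * ‖y‖ ^ 2)) := by fun_prop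
    have hYint : Integrable (fun ω => Real.exp (-(1 / (4 * ε)) * ‖Y ω‖ ^ 2)) P := by
      refine Integrable.mono' (integrable_const 1)
        ((hYcont.measurable.comp hY).stronglyMeasurable.aestronglyMeasurable)
        (Filter.Eventually.of_forall fun ω => ?_)
      rw [Real.norm_eq_abs, abs_of_pos (Real.exp_pos _)]
      apply Real.exp_le_one_iff.2
      nlinarith [sq_nonneg ‖Y ω‖]
    have hYbound : (∫ ω, Real.exp (-(1 / (4 * ε)) * ‖Y ω‖ ^ 2) ∂P)
        ≤ M * (Real.pi * (4 * ε)) ^ ((m:ℝ)/2) := by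
      have hmeq : (∫ ω, Real.exp (-(1 / (4 * ε)) * ‖Y ω‖ ^ 2) ∂P)
          = ∫ y : EuclideanSpace ℝ (Fin m),
              (((f y).toNNReal : ℝ)) • Real.exp (-(1 / (4 * ε)) * ‖y‖ ^ 2) := by
        have hdens' : ((volume : Measure (EuclideanSpace ℝ (Fin m))).withDensity
            fun y => ENNReal.ofReal (f y))
            = (volume : Measure (EuclideanSpace ℝ (Fin m))).withDensity
              (fun y => (((f y).toNNReal : ℝ≥0) : ℝ≥0∞)) := rfl
        rw [← integral_map hY.aemeasurable hYcont.aestronglyMeasurable, hdens, hdens',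
          integral_withDensity_eq_integral_smul hf.real_toNNReal]
        simp only [NNReal.smul_def, smul_eq_mul]
      rw [hmeq]
      have hRHSint : Integrable (fun y : EuclideanSpace ℝ (Fin m) =>
          M * Real.exp (-(1 / (4 * ε)) * ‖y‖ ^ 2)) := (hGint _ hb4).const_mul M
      have hLHSint : Integrable (fun y : EuclideanSpace ℝ (Fin m) =>
          (((f y).toNNReal : ℝ)) • Real.exp (-(1 / (4 * ε)) * ‖y‖ ^ 2)) := by
        refine Integrable.mono' hRHSint
          ((hf.real_toNNReal.coe_nnreal_real.stronglyMeasurable.mul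
            hYcont.measurable.stronglyMeasurable).aestronglyMeasurable)
          ?_
        filter_upwards [hfM] with y hy
        rw [Real.norm_eq_abs, smul_eq_mul, abs_mul, abs_of_nonneg (NNReal.coe_nonneg _),
          abs_of_pos (Real.exp_pos _)]
        refine mul_le_mul_of_nonneg_right ?_ (Real.exp_pos _).le
        rw [Real.coe_toNNReal']
        exact max_le (hy.trans le_rfl) hM0
      have := integral_mono_ae hLHSint hRHSint (by
        filter_upwards [hfM] with y hy
        rw [smul_eq_mul]
        refine mul_le_mul_of_nonneg_right ?_ (Real.exp_pos _).le
        rw [Real.coe_toNNReal']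
        exact max_le hy hM0)
      refine this.trans ?_
      rw [integral_const_mul, GaussianFourier.integral_rexp_neg_mul_sq_norm
        (V := EuclideanSpace ℝ (Fin m)) hb4, finrank_euclideanSpace_fin]
      have : Real.pi / (1 / (4 * ε)) = Real.pi * (4 * ε) := by
        field_simp
      rw [this]
    -- norm bound on the regularized integral
    have hCn : ‖(((Real.pi / ε : ℝ)) : ℂ) ^ ((m : ℂ) / 2)‖ = (Real.pi / ε) ^ ((m:ℝ)/2) := by
      rw [Complex.norm_cpow_eq_rpow_re_of_pos hπε]
      norm_num
    have hJle : ‖∫ v : EuclideanSpace ℝ (Fin m), ψ u v * ((Real.exp (-ε * ‖v‖ ^ 2) : ℝ) : ℂ)‖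
        ≤ (Real.pi / ε) ^ ((m:ℝ)/2) * ∫ ω, Real.exp (-(1 / (4 * ε)) * ‖Y ω‖ ^ 2) ∂P := by
      rw [hswap]
      simp_rw [hGauss]
      refine (norm_integral_le_integral_norm _).trans ?_
      have hnm : ∀ ω : Ω, ‖Complex.exp (Complex.I * ((⟪u, X ω⟫ : ℝ) : ℂ))
          * ((((Real.pi / ε : ℝ)) : ℂ) ^ ((m : ℂ) / 2)
            * Complex.exp (((-(1 / (4 * ε)) * ‖Y ω‖ ^ 2 : ℝ) : ℂ)))‖
          = (Real.pi / ε) ^ ((m:ℝ)/2) * Real.exp (-(1 / (4 * ε)) * ‖Y ω‖ ^ 2) := by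
        intro ω
        rw [norm_mul, norm_mul, hCn]
        have h1 : ‖Complex.exp (Complex.I * ((⟪u, X ω⟫ : ℝ) : ℂ))‖ = 1 := by
          rw [Complex.norm_exp]
          simp
        have h2 : ‖Complex.exp (((-(1 / (4 * ε)) * ‖Y ω‖ ^ 2 : ℝ) : ℂ))‖
            = Real.exp (-(1 / (4 * ε)) * ‖Y ω‖ ^ 2) := by
          rw [Complex.norm_exp, Complex.ofReal_re]
        rw [h1, h2, one_mul]
      simp_rw [hnm]
      rw [integral_const_mul]
    -- real part computation
    have hre := integral_re (μ := (volume : Measure (EuclideanSpace ℝ (Fin m)))) hInt1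
    simp only [RCLike.re_to_complex, Complex.mul_re, Complex.ofReal_re, Complex.ofReal_im,
      mul_zero, sub_zero] at hre
    -- integrability of the real integrand
    have hIntre : Integrable (fun v : EuclideanSpace ℝ (Fin m) =>
        (ψ u v).re * Real.exp (-ε * ‖v‖ ^ 2)) := by
      refine Integrable.mono' hgi
        (((Complex.measurable_re.comp hψsm.measurable).mul
          (by fun_prop : Measurable fun v : EuclideanSpace ℝ (Fin m) =>
            Real.exp (-ε * ‖v‖ ^ 2))).stronglyMeasurable.aestronglyMeasurable)
        (Filter.Eventually.of_forall fun v => ?_)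
      rw [Real.norm_eq_abs, abs_mul, abs_of_pos (Real.exp_pos _)]
      have h6 : |(ψ u v).re| ≤ 1 := (Complex.abs_re_le_norm _).trans
        (by exact hψ1 v)
      calc |(ψ u v).re| * Real.exp (-ε * ‖v‖ ^ 2)
          ≤ 1 * Real.exp (-ε * ‖v‖ ^ 2) :=
            mul_le_mul_of_nonneg_right h6 (Real.exp_pos _).le
        _ = Real.exp (-ε * ‖v‖ ^ 2) := one_mul _
    -- final assembly
    have hfinal : (∫ v : EuclideanSpace ℝ (Fin m), (ψ u v).re * Real.exp (-ε * ‖v‖ ^ 2))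
        ≤ M * (2 * Real.pi) ^ m := by
      rw [hre]
      refine (Complex.re_le_norm _).trans ?_
      refine hJle.trans ?_
      refine (mul_le_mul_of_nonneg_left hYbound (Real.rpow_nonneg hπε.le _)).trans_eq ?_
      rw [mul_comm M, ← mul_assoc, ← Real.mul_rpow hπε.le (by positivity)]
      have h5 : Real.pi / ε * (Real.pi * (4 * ε)) = (2 * Real.pi) ^ (2:ℕ) := by
        field_simp
        ring
      rw [h5, ← Real.rpow_natCast (2 * Real.pi) 2, ← Real.rpow_mul (by positivity),
        show ((2:ℕ):ℝ) * ((m:ℝ)/2) = ((m:ℕ):ℝ) by push_cast; ring,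
        Real.rpow_natCast]
      ring
    calc ∫⁻ v, ENNReal.ofReal ((ψ u v).re * Real.exp (-ε * ‖v‖ ^ 2))
        = ENNReal.ofReal (∫ v : EuclideanSpace ℝ (Fin m),
            (ψ u v).re * Real.exp (-ε * ‖v‖ ^ 2)) := by
          rw [ofReal_integral_eq_lintegral_ofReal hIntre
            (Filter.Eventually.of_forall fun v =>
              mul_nonneg (hnonneg u v) (Real.exp_pos _).le)]
      _ ≤ ENNReal.ofReal (M * (2 * Real.pi) ^ m) := ENNReal.ofReal_le_ofReal hfinal
  -- monotone convergence
  have hFm : ∀ k : ℕ, Measurable (fun v : EuclideanSpace ℝ (Fin m) =>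
      ENNReal.ofReal ((ψ u v).re * Real.exp (-(1 / ((k : ℝ) + 1)) * ‖v‖ ^ 2))) := by
    intro k
    apply Measurable.ennreal_ofReal
    exact (Complex.measurable_re.comp hψsm.measurable).mul
      (((measurable_norm.pow_const 2).const_mul _).exp)
  have hmono : ∀ v : EuclideanSpace ℝ (Fin m), Monotone (fun k : ℕ =>
      ENNReal.ofReal ((ψ u v).re * Real.exp (-(1 / ((k : ℝ) + 1)) * ‖v‖ ^ 2))) := by
    intro v k l hkl
    apply ENNReal.ofReal_le_ofReal
    have h1 : (1 : ℝ) / ((l : ℝ) + 1) ≤ 1 / ((k : ℝ) + 1) := by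
      gcongr
    have h2 : -(1 / ((k : ℝ) + 1)) * ‖v‖ ^ 2 ≤ -(1 / ((l : ℝ) + 1)) * ‖v‖ ^ 2 := by
      have := mul_le_mul_of_nonneg_right h1 (sq_nonneg ‖v‖)
      linarith
    exact mul_le_mul_of_nonneg_left (Real.exp_le_exp.2 h2) (hnonneg u v)
  have htend : ∀ v : EuclideanSpace ℝ (Fin m),
      Filter.Tendsto (fun k : ℕ =>
        ENNReal.ofReal ((ψ u v).re * Real.exp (-(1 / ((k : ℝ) + 1)) * ‖v‖ ^ 2)))
        Filter.atTop (nhds (ENNReal.ofReal ((ψ u v).re))) := by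
    intro v
    have h0 : Filter.Tendsto (fun k : ℕ => 1 / ((k : ℝ) + 1)) Filter.atTop (nhds 0) :=
      tendsto_one_div_add_atTop_nhds_zero_nat
    have h1 : Filter.Tendsto (fun k : ℕ => -(1 / ((k : ℝ) + 1)) * ‖v‖ ^ 2)
        Filter.atTop (nhds 0) := by
      have := (h0.neg).mul_const (‖v‖ ^ 2)
      simpa using this
    have h2 : Filter.Tendsto (fun k : ℕ => Real.exp (-(1 / ((k : ℝ) + 1)) * ‖v‖ ^ 2))
        Filter.atTop (nhds 1) := by
      have := (Real.continuous_exp.tendsto 0).comp h1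
      simpa [Function.comp_def] using this
    have h3 : Filter.Tendsto (fun k : ℕ => (ψ u v).re * Real.exp (-(1 / ((k : ℝ) + 1)) * ‖v‖ ^ 2))
        Filter.atTop (nhds ((ψ u v).re)) := by
      have := h2.const_mul ((ψ u v).re)
      simpa using this
    exact (ENNReal.continuous_ofReal.tendsto _).comp h3
  have hlim := lintegral_tendsto_of_tendsto_of_monotone
    (μ := (volume : Measure (EuclideanSpace ℝ (Fin m))))
    (f := fun k (v : EuclideanSpace ℝ (Fin m)) =>
      ENNReal.ofReal ((ψ u v).re * Real.exp (-(1 / ((k : ℝ) + 1)) * ‖v‖ ^ 2)))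
    (F := fun v => ENNReal.ofReal ((ψ u v).re))
    (fun k => (hFm k).aemeasurable)
    (Filter.Eventually.of_forall hmono)
    (Filter.Eventually.of_forall htend)
  refine le_of_tendsto' hlim (fun k => ?_)
  exact key (1 / ((k : ℝ) + 1)) (by positivity)

end
end

section
/- Let X be a Gamma-distributed random variable with shape a > 0 and rate 1, that is, with density x^{a−1} e^{−x}/Γ(a) on (0, ∞). Then for all real s and t, the joint characteristic function of (log X, −X) satisfies |E[exp(i(s · log X − t · X))]| = (|Γ(a + is)|/Γ(a)) · (1 + t²)^{−a/2} · exp(s · arctan t). -/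
open MeasureTheory ProbabilityTheory

noncomputable section

set_option maxHeartbeats 1000000

open Set Complex Filter


lemma aux_cont (z : ℂ) : ContinuousOn (fun x : ℝ => (x:ℂ) ^ (z - 1)) (Ioi 0) := by
  apply continuousOn_of_forall_continuousAt
  intro x hx
  exact (continuousAt_cpow_const <| ofReal_mem_slitPlane.2 hx).comp
    continuous_ofReal.continuousAt

lemma aux_sm (z c : ℂ) :
    AEStronglyMeasurable (fun x : ℝ => (x:ℂ) ^ (z - 1) * Complex.exp (-(c * x)))
      (volume.restrict (Ioi 0)) := by
  refine ContinuousOn.aestronglyMeasurable ?_ measurableSet_Ioi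
  exact (aux_cont z).mul
    (Complex.continuous_exp.comp ((continuous_const.mul Complex.continuous_ofReal).neg)).continuousOn

lemma aux_integrable {z c : ℂ} (hz : 0 < z.re) (hc : 0 < c.re) :
    IntegrableOn (fun x : ℝ => (x:ℂ) ^ (z - 1) * Complex.exp (-(c * x))) (Ioi 0) := by
  have h := integrableOn_rpow_mul_exp_neg_mul_rpow (p := 1) (s := z.re - 1) (b := c.re)
    (by linarith) zero_lt_one hc
  simp only [Real.rpow_one] at h
  refine h.mono' (aux_sm z c) ?_
  filter_upwards [ae_restrict_mem measurableSet_Ioi] with x hx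
  rw [norm_mul,
    Complex.norm_cpow_eq_rpow_re_of_pos hx, Complex.norm_exp]
  have : (-(c * (x:ℂ))).re = -c.re * x := by simp [Complex.mul_re]
  rw [this, Complex.sub_re, Complex.one_re]

lemma aux_sm' (z c : ℂ) :
    AEStronglyMeasurable (fun x : ℝ => (x:ℂ) ^ (z - 1) * (Complex.exp (-(c * x)) * -(x:ℂ)))
      (volume.restrict (Ioi 0)) := by
  refine ContinuousOn.aestronglyMeasurable ?_ measurableSet_Ioi
  exact (aux_cont z).mul
    ((Complex.continuous_exp.comp
      ((continuous_const.mul Complex.continuous_ofReal).neg)).mul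
      Complex.continuous_ofReal.neg).continuousOn

lemma aux_deriv {z : ℂ} (hz : 0 < z.re) {c₀ : ℂ} (hc₀ : 0 < c₀.re) :
    HasDerivAt (fun c : ℂ => ∫ x in Ioi (0:ℝ), (x:ℂ) ^ (z - 1) * Complex.exp (-(c * x)))
      (∫ x in Ioi (0:ℝ), (x:ℂ) ^ (z - 1) * (Complex.exp (-(c₀ * x)) * -(x:ℂ))) c₀ := by
  set ε := c₀.re / 2 with hε
  have hεpos : 0 < ε := by positivity
  have hb := integrableOn_rpow_mul_exp_neg_mul_rpow (p := 1) (s := z.re) (b := ε)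
    (by linarith) zero_lt_one hεpos
  simp only [Real.rpow_one] at hb
  refine (hasDerivAt_integral_of_dominated_loc_of_deriv_le (μ := volume.restrict (Ioi 0))
    (F := fun c (x : ℝ) => (x:ℂ) ^ (z - 1) * Complex.exp (-(c * x)))
    (F' := fun c (x : ℝ) => (x:ℂ) ^ (z - 1) * (Complex.exp (-(c * x)) * -(x:ℂ)))
    (bound := fun x : ℝ => x ^ z.re * Real.exp (-ε * x)) (Metric.ball_mem_nhds c₀ hεpos)
    (Filter.Eventually.of_forall (fun c => aux_sm z c))
    (aux_integrable hz hc₀) (aux_sm' z c₀) ?_ hb ?_).2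
  · filter_upwards [ae_restrict_mem measurableSet_Ioi] with x hx c hc
    have hre : ε ≤ c.re := by
      have h1 : |(c - c₀).re| ≤ ‖c - c₀‖ := Complex.abs_re_le_norm _
      have h2 : ‖c - c₀‖ < ε := by
        rwa [← Complex.dist_eq, ← Metric.mem_ball]
      have := (abs_lt.mp (h1.trans_lt h2)).1
      simp only [Complex.sub_re] at this
      linarith [hε ▸ this]
    rw [norm_mul, norm_mul,
      Complex.norm_cpow_eq_rpow_re_of_pos hx, Complex.norm_exp]
    have h3 : (-(c * (x:ℂ))).re = -c.re * x := by simp [Complex.mul_re]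
    rw [h3]
    have h4 : ‖-(x:ℂ)‖ = x := by
      rw [norm_neg, Complex.norm_real, Real.norm_of_nonneg (show (0:ℝ) < x from hx).le]
    rw [h4, Complex.sub_re, Complex.one_re]
    have h5 : x ^ (z.re - 1) * (Real.exp (-c.re * x) * x) = x ^ z.re * Real.exp (-c.re * x) := by
      rw [show z.re = z.re - 1 + 1 by ring, Real.rpow_add hx, Real.rpow_one]
      ring
    rw [h5]
    have hx' : (0:ℝ) < x := hx
    refine mul_le_mul_of_nonneg_left (Real.exp_le_exp.mpr ?_) (by positivity)
    exact mul_le_mul_of_nonneg_right (neg_le_neg hre) hx'.le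
  · filter_upwards [ae_restrict_mem measurableSet_Ioi] with x hx c hc
    have : HasDerivAt (fun c : ℂ => Complex.exp (-(c * x)))
        (Complex.exp (-(c * x)) * -(x:ℂ)) c := by
      have h1 : HasDerivAt (fun c : ℂ => -(c * x)) (-(x:ℂ)) c := by
        have h0 : HasDerivAt (fun c : ℂ => -(id c * (x:ℂ))) (-(1 * (x:ℂ))) c :=
          ((hasDerivAt_id c).mul_const (x:ℂ)).neg
        simpa using h0
      exact h1.cexp
    exact this.const_mul _

lemma gamma_integral_complex_rate {z : ℂ} (hz : 0 < z.re) {c : ℂ} (hc : 0 < c.re) :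
    ∫ x in Ioi (0:ℝ), (x:ℂ) ^ (z - 1) * Complex.exp (-(c * x)) = Complex.Gamma z / c ^ z := by
  set f : ℂ → ℂ := fun c => ∫ x in Ioi (0:ℝ), (x:ℂ) ^ (z - 1) * Complex.exp (-(c * x)) with hf
  set g : ℂ → ℂ := fun c => Complex.Gamma z / c ^ z with hg
  set U : Set ℂ := {c | 0 < c.re} with hU
  have hUopen : IsOpen U := isOpen_lt continuous_const Complex.continuous_re
  have hUconn : IsPreconnected U := (convex_halfSpace_re_gt 0).isPreconnected
  have hfa : AnalyticOnNhd ℂ f U := by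
    refine DifferentiableOn.analyticOnNhd (fun c hc => ?_) hUopen
    exact ((aux_deriv hz hc).differentiableAt).differentiableWithinAt
  have hga : AnalyticOnNhd ℂ g U := by
    refine DifferentiableOn.analyticOnNhd (fun c hc => ?_) hUopen
    have hcz : c ^ z ≠ 0 := by
      rw [Ne, Complex.cpow_eq_zero_iff]
      rintro ⟨rfl, -⟩
      simp only [hU, mem_setOf_eq, Complex.zero_re, lt_irrefl] at hc
    have hd : DifferentiableAt ℂ (fun c : ℂ => c ^ z) c := by
      refine (differentiableAt_id.cpow (differentiableAt_const z) ?_)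
      exact Or.inl hc
    exact ((differentiableAt_const _).div hd hcz).differentiableWithinAt
  have h1U : (1:ℂ) ∈ U := by simp [hU]
  have hfreq : ∃ᶠ w in nhdsWithin 1 {(1:ℂ)}ᶜ, f w = g w := by
    set u : ℕ → ℂ := fun n => (((1 + ((n:ℝ)+1)⁻¹ : ℝ)) : ℂ) with hu
    have key : ∀ n : ℕ, f (u n) = g (u n) := by
      intro n
      have hr : (0:ℝ) < 1 + ((n:ℝ)+1)⁻¹ := by positivity
      have hint := integral_cpow_mul_exp_neg_mul_Ioi hz hr
      have harg : ((1 + ((n:ℝ)+1)⁻¹ : ℝ) : ℂ) ≠ 0 :=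
        Complex.ofReal_ne_zero.mpr hr.ne'
      show (∫ x in Ioi (0:ℝ), (x:ℂ) ^ (z-1) * Complex.exp (-(u n * x))) = Complex.Gamma z / u n ^ z
      rw [hu]
      simp only
      rw [hint, one_div, Complex.inv_cpow _ _ ?h, div_eq_mul_inv, mul_comm]
      case h =>
        rw [Complex.arg_ofReal_of_nonneg hr.le]
        exact Real.pi_ne_zero.symm
    have htend : Filter.Tendsto u Filter.atTop (nhdsWithin 1 {(1:ℂ)}ᶜ) := by
      rw [tendsto_nhdsWithin_iff]
      constructor
      · have h0 : Filter.Tendsto (fun n : ℕ => 1 + ((n:ℝ)+1)⁻¹) Filter.atTop (nhds 1) := by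
          have : Filter.Tendsto (fun n : ℕ => ((n:ℝ)+1)⁻¹) Filter.atTop (nhds 0) := by
            simpa using tendsto_one_div_add_atTop_nhds_zero_nat (𝕜 := ℝ)
          simpa using this.const_add (1:ℝ)
        have h2 : Filter.Tendsto u Filter.atTop (nhds (((1:ℝ):ℂ))) :=
          (Complex.continuous_ofReal.tendsto 1).comp h0
        simpa using h2
      · filter_upwards with n
        simp only [hu, mem_compl_iff, mem_singleton_iff]
        intro h
        have h1 : (1 + ((n:ℝ)+1)⁻¹ : ℝ) = 1 := by exact_mod_cast h
        have hpos : (0:ℝ) < ((n:ℝ)+1)⁻¹ := by positivity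
        linarith
    exact htend.frequently (Filter.Eventually.of_forall key).frequently
  exact hfa.eqOn_of_preconnected_of_frequently_eq hga hUconn h1U hfreq hc

/-- if `X` is Gamma-distributed with shape `a > 0` and rate `1`, then for all
real `s` and `t`, the joint characteristic function of `(log X, −X)` satisfies
`|E[exp(i(s·log X − t·X))]| = (|Γ(a+is)|/Γ(a)) (1+t²)^{−a/2} exp(s arctan t)`. -/
theorem stmt15 {Ω : Type*} [MeasurableSpace Ω] (P : Measure Ω) [IsProbabilityMeasure P]
    (a : ℝ) (ha : 0 < a) (X : Ω → ℝ) (hX : Measurable X)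
    (hlaw : Measure.map X P = gammaMeasure a 1) (s t : ℝ) :
    ‖∫ ω, Complex.exp (Complex.I * ((s * Real.log (X ω) - t * X ω : ℝ) : ℂ)) ∂P‖
      = ‖Complex.Gamma ((a : ℂ) + (s : ℂ) * Complex.I)‖ / Real.Gamma a
        * (1 + t ^ 2) ^ (-(a / 2)) * Real.exp (s * Real.arctan t) := by
  set z : ℂ := (a:ℂ) + (s:ℂ) * Complex.I with hzdef
  set c : ℂ := 1 + (t:ℂ) * Complex.I with hcdef
  have hzre : z.re = a := by simp [hzdef]
  have hzim : z.im = s := by simp [hzdef]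
  have hcre : c.re = 1 := by simp [hcdef]
  have hcim : c.im = t := by simp [hcdef]
  have hΓa : 0 < Real.Gamma a := Real.Gamma_pos_of_pos ha
  have hc0 : c ≠ 0 := by
    intro h
    have := congrArg Complex.re h
    rw [hcre] at this
    simp at this
  -- Step 1: change of variables
  have hmeas : Measurable fun x : ℝ =>
      Complex.exp (Complex.I * ((s * Real.log x - t * x : ℝ) : ℂ)) := by
    apply Complex.measurable_exp.comp
    apply Measurable.const_mul
    exact Complex.measurable_ofReal.comp
      ((measurable_const.mul Real.measurable_log).sub (measurable_const.mul measurable_id))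
  have h1 : (∫ ω, Complex.exp (Complex.I * ((s * Real.log (X ω) - t * X ω : ℝ) : ℂ)) ∂P)
      = ∫ x, Complex.exp (Complex.I * ((s * Real.log x - t * x : ℝ) : ℂ))
          ∂(gammaMeasure a 1) := by
    rw [← hlaw, integral_map hX.aemeasurable hmeas.aestronglyMeasurable]
  -- Step 2: withDensity
  have h2 : (∫ x, Complex.exp (Complex.I * ((s * Real.log x - t * x : ℝ) : ℂ))
        ∂(gammaMeasure a 1))
      = ∫ x : ℝ, (gammaPDFReal a 1 x : ℂ) *
          Complex.exp (Complex.I * ((s * Real.log x - t * x : ℝ) : ℂ)) := by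
    rw [gammaMeasure]
    have hd : gammaPDF a 1 = fun x => ((Real.toNNReal (gammaPDFReal a 1 x) : NNReal) : ENNReal) :=
      rfl
    rw [hd, integral_withDensity_eq_integral_smul (measurable_gammaPDFReal a 1).real_toNNReal]
    congr 1
    ext x
    rw [NNReal.smul_def, Real.coe_toNNReal _ (gammaPDFReal_nonneg ha one_pos x),
      Complex.real_smul]
  -- Step 3: restrict to Ioi 0
  have h3 : (∫ x : ℝ, (gammaPDFReal a 1 x : ℂ) *
        Complex.exp (Complex.I * ((s * Real.log x - t * x : ℝ) : ℂ)))
      = ∫ x in Ioi (0:ℝ), (gammaPDFReal a 1 x : ℂ) *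
          Complex.exp (Complex.I * ((s * Real.log x - t * x : ℝ) : ℂ)) := by
    rw [← integral_indicator measurableSet_Ioi]
    apply integral_congr_ae
    have h0 : ({(0:ℝ)}ᶜ : Set ℝ) ∈ ae (volume : Measure ℝ) :=
      compl_mem_ae_iff.mpr (measure_singleton 0)
    filter_upwards [h0] with x hx
    rcases lt_trichotomy x 0 with hlt | heq | hgt
    · rw [indicator_of_notMem (by simpa using hlt.not_ge ∘ le_of_lt)]
      have : gammaPDFReal a 1 x = 0 := by
        rw [gammaPDFReal, if_neg (not_le.mpr hlt)]
      rw [this]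
      simp
    · exact absurd heq hx
    · rw [indicator_of_mem (mem_Ioi.mpr hgt)]
  -- Step 4: pointwise identification of the integrand
  have h4 : ∀ x ∈ Ioi (0:ℝ), (gammaPDFReal a 1 x : ℂ) *
        Complex.exp (Complex.I * ((s * Real.log x - t * x : ℝ) : ℂ))
      = ((Real.Gamma a : ℂ))⁻¹ * ((x:ℂ) ^ (z - 1) * Complex.exp (-(c * x))) := by
    intro x hx
    have hx' : (0:ℝ) < x := hx
    have hpdf : gammaPDFReal a 1 x
        = (Real.Gamma a)⁻¹ * (Real.exp ((a-1) * Real.log x) * Real.exp (-x)) := by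
      rw [gammaPDFReal, if_pos hx'.le, Real.rpow_def_of_pos hx', one_mul, Real.one_rpow]
      ring
    have eexp : ((a:ℂ)-1) * (Real.log x : ℂ) + -(x:ℂ)
          + Complex.I * ((s:ℂ) * (Real.log x : ℂ) - (t:ℂ) * (x:ℂ))
        = (Real.log x : ℂ) * (z-1) + -(c * (x:ℂ)) := by
      rw [hzdef, hcdef]
      ring
    calc (gammaPDFReal a 1 x : ℂ) *
          Complex.exp (Complex.I * ((s * Real.log x - t * x : ℝ) : ℂ))
        = ((Real.Gamma a : ℂ))⁻¹ * Complex.exp (((a:ℂ)-1) * (Real.log x : ℂ) + -(x:ℂ)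
            + Complex.I * ((s:ℂ) * (Real.log x : ℂ) - (t:ℂ) * (x:ℂ))) := by
          rw [hpdf, Complex.exp_add, Complex.exp_add]
          push_cast
          ring
      _ = ((Real.Gamma a : ℂ))⁻¹ * Complex.exp ((Real.log x : ℂ) * (z-1) + -(c * (x:ℂ))) := by
          rw [eexp]
      _ = ((Real.Gamma a : ℂ))⁻¹ * ((x:ℂ) ^ (z - 1) * Complex.exp (-(c * x))) := by
          rw [Complex.exp_add, Complex.cpow_def_of_ne_zero (Complex.ofReal_ne_zero.mpr hx'.ne'),
            ← Complex.ofReal_log hx'.le]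
  -- Step 5: the integral
  have h5 : (∫ x in Ioi (0:ℝ), (gammaPDFReal a 1 x : ℂ) *
        Complex.exp (Complex.I * ((s * Real.log x - t * x : ℝ) : ℂ)))
      = ((Real.Gamma a : ℂ))⁻¹ * (Complex.Gamma z / c ^ z) := by
    rw [setIntegral_congr_fun measurableSet_Ioi h4, integral_const_mul,
      gamma_integral_complex_rate (by rw [hzre]; exact ha) (by rw [hcre]; norm_num)]
  rw [h1, h2, h3, h5]
  -- Step 6: absolute values
  have habsc : ‖c‖ = Real.sqrt (1 + t^2) := by
    rw [Complex.norm_def, Complex.normSq_apply, hcre, hcim]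
    congr 1
    ring
  have harg : Complex.arg c = Real.arctan t := by
    have h1' : Real.tan (Complex.arg c) = t := by
      rw [Complex.tan_arg, hcre, hcim]
      simp
    have h2' : |Complex.arg c| < Real.pi/2 :=
      Complex.abs_arg_lt_pi_div_two_iff.mpr (Or.inl (by rw [hcre]; norm_num))
    obtain ⟨hl, hr⟩ := abs_lt.mp h2'
    rw [← h1', Real.arctan_tan (by linarith) hr]
  have hsq : Real.sqrt (1 + t^2) ^ a = (1 + t^2) ^ (a/2 : ℝ) := by
    rw [Real.sqrt_eq_rpow, ← Real.rpow_mul (by positivity)]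
    congr 1
    ring
  rw [norm_mul, norm_div, norm_inv, Complex.norm_real, Real.norm_of_nonneg hΓa.le,
    Complex.norm_cpow_of_ne_zero hc0, habsc, harg, hzre, hzim, hsq]
  have hB : (0:ℝ) < (1 + t^2) ^ (a/2 : ℝ) := by positivity
  rw [Real.rpow_neg (by positivity : (0:ℝ) ≤ 1 + t^2)]
  rw [div_div_eq_mul_div, mul_comm (Real.arctan t) s]
  field_simp

end
end
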